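/- For λ < 0, the quantile function of the skew normal SN(λ) satisfies F⁻¹(u) ~ -√( -2 log( (u/2)√(-4π log((u/2)√(2π))) ) ) as u → 0⁺; in particular F⁻¹(u) ~ -√(-2 log u). -/

import Mathlib

open Real MeasureTheory Filter Set

noncomputable def stdNormalPdf (t : ℝ) : ℝ := (Real.sqrt (2 * π))⁻¹ * Real.exp (-t ^ 2 / 2)

noncomputable def stdNormalCdf (z : ℝ) : ℝ := ∫ t in Set.Iic z, stdNormalPdf t

noncomputable def skewNormalCdf (l z : ℝ) : ℝ :=
  ∫ t in Set.Iic z, 2 * stdNormalPdf t * stdNormalCdf (l * t)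

lemma pdf_pos (t : ℝ) : 0 < stdNormalPdf t := by
  unfold stdNormalPdf; positivity

lemma pdf_eq : stdNormalPdf = fun t => (Real.sqrt (2*π))⁻¹ * Real.exp (-2⁻¹ * t ^ 2) := by
  funext t; unfold stdNormalPdf; congr 1; ring_nf

lemma pdf_integrable : Integrable stdNormalPdf := by
  rw [pdf_eq]
  exact (integrable_exp_neg_mul_sq (by norm_num : (0:ℝ) < 2⁻¹)).const_mul _

lemma pdf_integral : ∫ t, stdNormalPdf t = 1 := by
  rw [pdf_eq, integral_const_mul, integral_gaussian,
    show π / 2⁻¹ = 2 * π by ring, inv_mul_cancel₀ (by positivity)]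

lemma cdf_mono : Monotone stdNormalCdf := fun a b hab =>
  setIntegral_mono_set pdf_integrable.integrableOn
    (Filter.Eventually.of_forall fun t => (pdf_pos t).le)
    (HasSubset.Subset.eventuallyLE (Iic_subset_Iic.2 hab))

lemma cdf_nonneg (z : ℝ) : 0 ≤ stdNormalCdf z :=
  setIntegral_nonneg measurableSet_Iic fun t _ => (pdf_pos t).le

lemma cdf_le_one (z : ℝ) : stdNormalCdf z ≤ 1 := by
  rw [← pdf_integral]
  exact setIntegral_le_integral pdf_integrable
    (Filter.Eventually.of_forall fun t => (pdf_pos t).le)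

lemma cdf_zero : stdNormalCdf 0 = 1/2 := by
  have heven : ∀ x : ℝ, stdNormalPdf (-x) = stdNormalPdf x := by
    intro x; unfold stdNormalPdf; ring_nf
  have h1 : stdNormalCdf 0 = ∫ t in Set.Ioi (0:ℝ), stdNormalPdf t := by
    unfold stdNormalCdf
    rw [show (0:ℝ) = -0 by ring, ← integral_comp_neg_Iic]
    simp_rw [heven]
    norm_num
  have h2 := intervalIntegral.integral_Iic_add_Ioi (μ := volume) (b := (0:ℝ))
    pdf_integrable.integrableOn pdf_integrable.integrableOn
  rw [pdf_integral] at h2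
  rw [← h1] at h2
  change stdNormalCdf 0 + stdNormalCdf 0 = 1 at h2
  linarith

lemma cdf_half_le {x : ℝ} (hx : 0 ≤ x) : 1/2 ≤ stdNormalCdf x :=
  cdf_zero ▸ cdf_mono hx

lemma cdf_lower {z : ℝ} (hz : z ≤ 0) : stdNormalPdf (z - 1) ≤ stdNormalCdf z := by
  have h1 : stdNormalPdf (z - 1) ≤ ∫ t in Set.Ioc (z-1) z, stdNormalPdf t := by
    have hconst : stdNormalPdf (z - 1)
        = ∫ _t in Set.Ioc (z-1) z, stdNormalPdf (z - 1) := by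
      rw [setIntegral_const]
      rw [measureReal_def, Real.volume_Ioc]
      rw [show z - (z - 1) = 1 by ring]
      simp
    rw [hconst]
    apply setIntegral_mono_on
    · exact integrableOn_const (by rw [Real.volume_Ioc]; exact ENNReal.ofReal_ne_top)
    · exact pdf_integrable.integrableOn
    · exact measurableSet_Ioc
    · intro t ht
      unfold stdNormalPdf
      apply mul_le_mul_of_nonneg_left _ (by positivity)
      apply Real.exp_le_exp.2
      have h2 : t^2 ≤ (z-1)^2 := by nlinarith [ht.1, ht.2]
      linarith
  refine h1.trans (setIntegral_mono_set pdf_integrable.integrableOn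
    (Filter.Eventually.of_forall fun t => (pdf_pos t).le)
    (HasSubset.Subset.eventuallyLE (fun t ht => ht.2)))

-- upper bound: Φ(z) ≤ exp(-z²/2) for z ≤ 0
lemma cdf_upper {z : ℝ} (hz : z ≤ 0) : stdNormalCdf z ≤ Real.exp (-z^2/2) := by
  have key : ∀ t ∈ Set.Iic z, stdNormalPdf t
      ≤ Real.exp (-z^2/2) * ((Real.sqrt (2*π))⁻¹ * Real.exp (-(t-z)^2/2)) := by
    intro t ht
    unfold stdNormalPdf
    rw [show Real.exp (-z^2/2) * ((Real.sqrt (2*π))⁻¹ * Real.exp (-(t-z)^2/2))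
      = (Real.sqrt (2*π))⁻¹ * (Real.exp (-z^2/2) * Real.exp (-(t-z)^2/2)) by ring,
      ← Real.exp_add]
    apply mul_le_mul_of_nonneg_left _ (by positivity)
    apply Real.exp_le_exp.2
    have ht' : t ≤ z := ht
    nlinarith
  have hshift : Integrable (fun t : ℝ => (Real.sqrt (2*π))⁻¹ * Real.exp (-(t-z)^2/2)) := by
    have := pdf_integrable.comp_sub_right z
    exact this.congr (Filter.Eventually.of_forall fun t => by unfold stdNormalPdf; ring_nf)
  have h1 : stdNormalCdf z ≤ ∫ t in Set.Iic z,
      Real.exp (-z^2/2) * ((Real.sqrt (2*π))⁻¹ * Real.exp (-(t-z)^2/2)) := by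
    apply setIntegral_mono_on pdf_integrable.integrableOn
      ((hshift.const_mul _).integrableOn) measurableSet_Iic key
  have h2 : ∫ t in Set.Iic z,
      Real.exp (-z^2/2) * ((Real.sqrt (2*π))⁻¹ * Real.exp (-(t-z)^2/2))
      ≤ Real.exp (-z^2/2) * 1 := by
    rw [integral_const_mul]
    apply mul_le_mul_of_nonneg_left _ (Real.exp_pos _).le
    have h3 : ∫ t in Set.Iic z, (Real.sqrt (2*π))⁻¹ * Real.exp (-(t-z)^2/2)
        ≤ ∫ t : ℝ, (Real.sqrt (2*π))⁻¹ * Real.exp (-(t-z)^2/2) :=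
      setIntegral_le_integral hshift (Filter.Eventually.of_forall fun t => by positivity)
    have h4 : ∫ t : ℝ, (Real.sqrt (2*π))⁻¹ * Real.exp (-(t-z)^2/2) = 1 := by
      have he : (fun t : ℝ => (Real.sqrt (2*π))⁻¹ * Real.exp (-(t-z)^2/2))
          = fun t : ℝ => stdNormalPdf (t - z) := by
        funext t; unfold stdNormalPdf; ring_nf
      rw [he, integral_sub_right_eq_self stdNormalPdf z, pdf_integral]
    linarith
  linarith [h1, h2.trans_eq (mul_one _)]

lemma pdf_continuous : Continuous stdNormalPdf := by
  unfold stdNormalPdf; fun_prop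

lemma sk_nonneg (l t : ℝ) : 0 ≤ 2 * stdNormalPdf t * stdNormalCdf (l * t) := by
  have := pdf_pos t; have := cdf_nonneg (l * t); positivity

lemma sk_integrable (l : ℝ) :
    Integrable (fun t => 2 * stdNormalPdf t * stdNormalCdf (l * t)) := by
  apply Integrable.mono' (pdf_integrable.const_mul 2)
  · exact (((continuous_const.mul pdf_continuous).measurable).mul
      (cdf_mono.measurable.comp (measurable_const_mul l))).aestronglyMeasurable
  · filter_upwards with t
    rw [Real.norm_eq_abs, abs_of_nonneg (sk_nonneg l t)]
    have h1 := cdf_le_one (l * t)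
    have h2 := (pdf_pos t).le
    nlinarith

lemma skcdf_mono (l : ℝ) : Monotone (skewNormalCdf l) := fun a b hab =>
  setIntegral_mono_set (sk_integrable l).integrableOn
    (Filter.Eventually.of_forall fun t => sk_nonneg l t)
    (HasSubset.Subset.eventuallyLE (Iic_subset_Iic.2 hab))

lemma skcdf_upper {l z : ℝ} (hz : z ≤ 0) :
    skewNormalCdf l z ≤ 2 * Real.exp (-z^2/2) := by
  have h1 : skewNormalCdf l z ≤ ∫ t in Set.Iic z, 2 * stdNormalPdf t := by
    apply setIntegral_mono_on (sk_integrable l).integrableOn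
      ((pdf_integrable.const_mul 2).integrableOn) measurableSet_Iic
    intro t _
    have h1 := cdf_le_one (l * t)
    have h2 := (pdf_pos t).le
    nlinarith
  rw [integral_const_mul] at h1
  have h2 := cdf_upper hz
  unfold stdNormalCdf at h2
  nlinarith
lemma skcdf_lower {l z : ℝ} (hl : l ≤ 0) (hz : z ≤ 0) :
    stdNormalPdf (z - 1) ≤ skewNormalCdf l z := by
  have h1 : stdNormalCdf z ≤ skewNormalCdf l z := by
    apply setIntegral_mono_on pdf_integrable.integrableOn
      (sk_integrable l).integrableOn measurableSet_Iic
    intro t ht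
    have ht' : t ≤ 0 := le_trans ht hz
    have h2 : (0:ℝ) ≤ l * t := by nlinarith
    have h3 := cdf_half_le h2
    have h4 := (pdf_pos t).le
    nlinarith
  exact (cdf_lower hz).trans h1

lemma tendsto_y : Tendsto (fun u : ℝ => -2 * Real.log u) (nhdsWithin 0 (Set.Ioi 0)) atTop := by
  have h : Tendsto (fun u : ℝ => Real.log u) (nhdsWithin 0 (Set.Ioi 0)) atBot :=
    Real.tendsto_log_nhdsGT_zero
  have h2 : Tendsto (fun u : ℝ => 2 * Real.log u) (nhdsWithin 0 (Set.Ioi 0)) atBot :=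
    h.const_mul_atBot two_pos
  have h3 := tendsto_neg_atBot_atTop.comp h2
  refine h3.congr fun u => by simp only [Function.comp_apply]; ring

lemma sqrt_tendsto_atTop : Tendsto Real.sqrt atTop atTop := by
  have h := tendsto_rpow_atTop (by norm_num : (0:ℝ) < 1/2)
  exact h.congr fun t => (Real.sqrt_eq_rpow t).symm

lemma inv_sqrt_tendsto : Tendsto (fun t : ℝ => 1 / Real.sqrt t) atTop (nhds 0) := by
  simp only [one_div]
  exact sqrt_tendsto_atTop.inv_tendsto_atTop


lemma div_linear_tendsto (a b : ℝ) :
    Tendsto (fun t : ℝ => (a * t + b) / t) atTop (nhds a) := by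
  have h : Tendsto (fun t : ℝ => a + b / t) atTop (nhds (a + 0)) :=
    tendsto_const_nhds.add (tendsto_const_nhds.div_atTop tendsto_id)
  rw [add_zero] at h
  refine h.congr' ?_
  filter_upwards [eventually_gt_atTop 0] with t ht
  field_simp

lemma sqrt_ratio (c : ℝ) :
    Tendsto (fun t : ℝ => Real.sqrt (t + c) / Real.sqrt t) atTop (nhds 1) := by
  have h : Tendsto (fun t : ℝ => (t + c) / t) atTop (nhds 1) := by
    simpa using div_linear_tendsto 1 c
  have h2 : Tendsto (fun t : ℝ => Real.sqrt ((t + c) / t)) atTop (nhds 1) := by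
    have := (Real.continuous_sqrt.tendsto 1).comp h
    simpa [Function.comp_def] using this
  refine h2.congr' ?_
  filter_upwards [eventually_ge_atTop (max 0 (-c))] with t ht
  rw [Real.sqrt_div (by linarith [le_max_right (0:ℝ) (-c), le_max_left (0:ℝ) (-c)] : 0 ≤ t + c)]

lemma logratio (a b : ℝ) (ha : 0 < a) :
    Tendsto (fun t : ℝ => Real.log (a * t + b) / t) atTop (nhds 0) := by
  have hs : Tendsto (fun t : ℝ => a * t + b) atTop atTop :=
    tendsto_atTop_add_const_right _ b (tendsto_id.const_mul_atTop ha)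
  have h1 : Tendsto (fun t : ℝ => Real.log (a * t + b) / (a * t + b)) atTop (nhds 0) :=
    (Real.isLittleO_log_id_atTop.tendsto_div_nhds_zero).comp hs
  have h2 := div_linear_tendsto a b
  have h3 := h1.mul h2
  rw [zero_mul] at h3
  refine h3.congr' ?_
  have hev : ∀ᶠ t : ℝ in atTop, 0 < a * t + b := hs.eventually_gt_atTop 0
  filter_upwards [hev, eventually_gt_atTop 0] with t h0 ht
  field_simp

lemma ratio_tendsto :
    Tendsto (fun u : ℝ => Real.sqrt (-2 * Real.log u) /
      Real.sqrt (-2 * Real.log ((u / 2) * Real.sqrt (-(4 * π) * Real.log ((u / 2) * Real.sqrt (2 * π))))))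
      (nhdsWithin 0 (Set.Ioi 0)) (nhds 1) := by
  set y : ℝ → ℝ := fun u => -2 * Real.log u with hy
  set L : ℝ → ℝ := fun u => -(4 * π) * Real.log ((u / 2) * Real.sqrt (2 * π)) with hL
  set B : ℝ → ℝ := fun u => -2 * Real.log ((u / 2) * Real.sqrt (L u)) with hB
  have hsq2pi : (0:ℝ) < Real.sqrt (2 * π) := Real.sqrt_pos.2 (by positivity)
  -- event: u > 0 and y u large
  have hev : ∀ᶠ u in nhdsWithin (0:ℝ) (Set.Ioi 0),
      0 < u ∧ max (4 * (1 + |Real.log 2| + |Real.log (Real.sqrt (2*π))|)) 4 < y u := by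
    filter_upwards [self_mem_nhdsWithin, tendsto_y.eventually_gt_atTop _] with u h1 h2
    exact ⟨h1, h2⟩
  -- identities on the event
  have hLlin : ∀ᶠ u in nhdsWithin (0:ℝ) (Set.Ioi 0),
      L u = 2 * π * y u + 4 * π * (Real.log 2 - Real.log (Real.sqrt (2 * π))) := by
    filter_upwards [hev] with u ⟨hu, _⟩
    simp only [hL, hy]
    rw [Real.log_mul (by positivity) (ne_of_gt hsq2pi), Real.log_div (ne_of_gt hu) two_ne_zero]
    ring
  have hLpos : ∀ᶠ u in nhdsWithin (0:ℝ) (Set.Ioi 0), 0 < L u := by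
    filter_upwards [hLlin, hev] with u hlin ⟨hu, hylarge⟩
    rw [hlin]
    have h4 : (4:ℝ) < y u := lt_of_le_of_lt (le_max_right _ _) hylarge
    have h5 : 4 * (1 + |Real.log 2| + |Real.log (Real.sqrt (2*π))|) < y u :=
      lt_of_le_of_lt (le_max_left _ _) hylarge
    nlinarith [Real.pi_gt_three, abs_nonneg (Real.log 2), abs_nonneg (Real.log (Real.sqrt (2*π))), le_abs_self (Real.log (Real.sqrt (2*π))), neg_abs_le (Real.log (Real.sqrt (2*π))), le_abs_self (Real.log 2), neg_abs_le (Real.log 2)]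
  have hBeq : ∀ᶠ u in nhdsWithin (0:ℝ) (Set.Ioi 0),
      B u = y u + 2 * Real.log 2 - Real.log (L u) := by
    filter_upwards [hev, hLpos] with u ⟨hu, _⟩ hLp
    simp only [hB, hy]
    rw [Real.log_mul (by positivity) (ne_of_gt (Real.sqrt_pos.2 hLp)),
      Real.log_div (ne_of_gt hu) two_ne_zero, Real.log_sqrt hLp.le]
    ring
  -- B/y → 1
  have hBy : Tendsto (fun u => B u / y u) (nhdsWithin 0 (Set.Ioi 0)) (nhds 1) := by
    have hlogL : Tendsto (fun u => Real.log (L u) / y u) (nhdsWithin 0 (Set.Ioi 0)) (nhds 0) := by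
      have := (logratio (2 * π) (4 * π * (Real.log 2 - Real.log (Real.sqrt (2 * π))))
        (by positivity)).comp tendsto_y
      refine this.congr' ?_
      filter_upwards [hLlin] with u hlin
      simp only [Function.comp]
      rw [← hlin]
    have hc : Tendsto (fun u => (2 * Real.log 2) / y u) (nhdsWithin 0 (Set.Ioi 0)) (nhds 0) :=
      tendsto_const_nhds.div_atTop tendsto_y
    have h := (tendsto_const_nhds (x := (1:ℝ)) (f := nhdsWithin (0:ℝ) (Set.Ioi 0))).add
      (hc.sub hlogL)
    norm_num at h
    refine Tendsto.congr' ?_ h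
    filter_upwards [hBeq, hev] with u hBu ⟨hu, hyl⟩
    have hy4 : (4:ℝ) < y u := lt_of_le_of_lt (le_max_right _ _) hyl
    have hy0 : y u ≠ 0 := by linarith
    rw [hBu]
    field_simp
    ring
  have hyB : Tendsto (fun u => y u / B u) (nhdsWithin 0 (Set.Ioi 0)) (nhds 1) := by
    have h := hBy.inv₀ one_ne_zero
    rw [inv_one] at h
    refine Tendsto.congr' ?_ h
    filter_upwards with u
    rw [inv_div]
  have hsq : Tendsto (fun u => Real.sqrt (y u / B u)) (nhdsWithin 0 (Set.Ioi 0)) (nhds 1) := by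
    have := (Real.continuous_sqrt.tendsto 1).comp hyB
    simpa [Function.comp_def] using this
  refine Tendsto.congr' ?_ hsq
  filter_upwards [hev] with u ⟨hu, hyl⟩
  have hy4 : (4:ℝ) < y u := lt_of_le_of_lt (le_max_right _ _) hyl
  rw [Real.sqrt_div (by linarith : 0 ≤ y u)]

lemma main2 (l : ℝ) (hl : l < 0) (Q : ℝ → ℝ)
    (hQ : ∀ u ∈ Set.Ioo (0 : ℝ) 1, skewNormalCdf l (Q u) = u) :
    Tendsto (fun u : ℝ => Q u / (-Real.sqrt (-2 * Real.log u)))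
      (nhdsWithin 0 (Set.Ioi 0)) (nhds 1) := by
  set y : ℝ → ℝ := fun u => -2 * Real.log u with hy
  have hlo : Tendsto (fun u => Real.sqrt (y u + -Real.log (2*π)) / Real.sqrt (y u)
      - 1 / Real.sqrt (y u)) (nhdsWithin 0 (Set.Ioi 0)) (nhds 1) := by
    have h := ((sqrt_ratio (-Real.log (2*π))).comp tendsto_y).sub
      (inv_sqrt_tendsto.comp tendsto_y)
    rw [sub_zero] at h
    exact h
  have hhi : Tendsto (fun u => Real.sqrt (y u + 2 * Real.log 2) / Real.sqrt (y u))
      (nhdsWithin 0 (Set.Ioi 0)) (nhds 1) := (sqrt_ratio (2 * Real.log 2)).comp tendsto_y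
  refine tendsto_of_tendsto_of_tendsto_of_le_of_le' hlo hhi ?_ ?_
  all_goals {
    filter_upwards [self_mem_nhdsWithin,
      (eventually_lt_nhds one_pos).filter_mono nhdsWithin_le_nhds,
      (eventually_lt_nhds (pdf_pos (-2))).filter_mono nhdsWithin_le_nhds,
      tendsto_y.eventually_gt_atTop (max (Real.log (2*π) + 1) 1)] with u hu0 hu1 hupdf hylarge
    have hu0' : (0:ℝ) < u := hu0
    set z := Q u with hz
    have hFz : skewNormalCdf l z = u := hQ u ⟨hu0', hu1⟩
    have hy1 : (1:ℝ) < y u := lt_of_le_of_lt (le_max_right _ _) hylarge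
    have hyc : Real.log (2*π) + 1 < y u := lt_of_le_of_lt (le_max_left _ _) hylarge
    have hg : (0:ℝ) < Real.sqrt (y u) := Real.sqrt_pos.2 (by linarith)
    -- z ≤ -1
    have hz1 : z ≤ -1 := by
      by_contra h
      push_neg at h
      have h2 : skewNormalCdf l (-1) ≤ skewNormalCdf l z := skcdf_mono l (by linarith)
      have h3 : stdNormalPdf (-2) ≤ skewNormalCdf l (-1) := by
        have := skcdf_lower (l := l) (z := -1) hl.le (by norm_num)
        norm_num at this
        exact this
      linarith [hFz ▸ (h3.trans h2)]
    have hz0 : z ≤ 0 := by linarith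
    -- upper bound on u
    have hup : u ≤ 2 * Real.exp (-z^2/2) := hFz ▸ skcdf_upper hz0
    have hlogup : Real.log u ≤ Real.log 2 + (-z^2/2) := by
      calc Real.log u ≤ Real.log (2 * Real.exp (-z^2/2)) := Real.log_le_log hu0' hup
        _ = Real.log 2 + (-z^2/2) := by
            rw [Real.log_mul two_ne_zero (Real.exp_ne_zero _), Real.log_exp]
    have hzsq : z^2 ≤ y u + 2 * Real.log 2 := by simp only [hy]; nlinarith
    have hnegz : -z ≤ Real.sqrt (y u + 2 * Real.log 2) :=
      (Real.le_sqrt (by linarith) (by nlinarith)).2 (by nlinarith)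
    -- lower bound on u
    have hlow : stdNormalPdf (z - 1) ≤ u := hFz ▸ skcdf_lower hl.le hz0
    have hloglow : -Real.log (Real.sqrt (2*π)) + (-(z-1)^2/2) ≤ Real.log u := by
      have h1 : Real.log (stdNormalPdf (z-1)) ≤ Real.log u :=
        Real.log_le_log (pdf_pos _) hlow
      have h2 : Real.log (stdNormalPdf (z-1))
          = -Real.log (Real.sqrt (2*π)) + (-(z-1)^2/2) := by
        unfold stdNormalPdf
        rw [Real.log_mul (by positivity) (Real.exp_ne_zero _), Real.log_inv, Real.log_exp]
      linarith [h2 ▸ h1]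
    have hA : y u + -Real.log (2*π) ≤ (1 - z)^2 := by
      have hls : Real.log (Real.sqrt (2*π)) = Real.log (2*π) / 2 :=
        Real.log_sqrt (by positivity)
      have : (z-1)^2 = (1-z)^2 := by ring
      simp only [hy]
      nlinarith
    have hsA : Real.sqrt (y u + -Real.log (2*π)) ≤ 1 - z := by
      calc Real.sqrt (y u + -Real.log (2*π)) ≤ Real.sqrt ((1-z)^2) := Real.sqrt_le_sqrt hA
        _ = 1 - z := Real.sqrt_sq (by linarith)
    -- conclude the two inequalities
    have hrw : z / -Real.sqrt (y u) = (-z) / Real.sqrt (y u) := by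
      rw [div_neg, neg_div]
    first
    | -- lower bound goal
      (show Real.sqrt (y u + -Real.log (2*π)) / Real.sqrt (y u) - 1 / Real.sqrt (y u)
          ≤ z / -Real.sqrt (y u)
       rw [hrw, div_sub_div_same]
       exact (div_le_div_iff_of_pos_right hg).2 (by linarith))
    | -- upper bound goal
      (show z / -Real.sqrt (y u) ≤ Real.sqrt (y u + 2 * Real.log 2) / Real.sqrt (y u)
       rw [hrw]
       exact (div_le_div_iff_of_pos_right hg).2 hnegz)
  }


/-- For l < 0, the quantile function of SN(l) satisfies
F⁻¹(u) ~ -√(-2 log((u/2)√(-4π log((u/2)√(2π))))) as u → 0⁺,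
and in particular F⁻¹(u) ~ -√(-2 log u). -/
theorem skewNormal_quantile_asymp_neg (l : ℝ) (hl : l < 0) (Q : ℝ → ℝ)
    (hQ : ∀ u ∈ Set.Ioo (0 : ℝ) 1, skewNormalCdf l (Q u) = u) :
    Tendsto (fun u : ℝ =>
      Q u / (-Real.sqrt (-2 *
        Real.log ((u / 2) * Real.sqrt (-(4 * π) * Real.log ((u / 2) * Real.sqrt (2 * π)))))))
      (nhdsWithin 0 (Set.Ioi 0)) (nhds 1) ∧
    Tendsto (fun u : ℝ => Q u / (-Real.sqrt (-2 * Real.log u)))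
      (nhdsWithin 0 (Set.Ioi 0)) (nhds 1) := by
  have part2 := main2 l hl Q hQ
  refine ⟨?_, part2⟩
  have h := part2.mul ratio_tendsto
  rw [mul_one] at h
  refine Tendsto.congr' ?_ h
  filter_upwards [tendsto_y.eventually_gt_atTop 0] with u hy0
  set a := Real.sqrt (-2 * Real.log u) with hadef
  set b := Real.sqrt (-2 *
    Real.log ((u / 2) * Real.sqrt (-(4 * π) * Real.log ((u / 2) * Real.sqrt (2 * π))))) with hbdef
  have ha : a ≠ 0 := ne_of_gt (Real.sqrt_pos.2 hy0)
  show Q u / -a * (a / b) = Q u / -b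
  rw [div_mul_div_comm, neg_mul, div_neg, div_neg, mul_comm (Q u) a,
    mul_div_mul_left _ _ ha]
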